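/- Let G = SL_n or GL_n, and let I ⊆ G(L) be the Iwahori subgroup consisting of the elements of G(L) that are of Iwahori form. Call x ∈ G(L) an ε-monomial matrix if x has exactly one nonzero entry in each row and each column and every nonzero entry is an integer power of ε. Suppose M ∈ I·x·I and M' ∈ I·x'·I, where x and x' are ε-monomial matrices, and suppose that for every 1 ≤ m ≤ n and every pair (s, t) of strictly increasing m-tuples of indices from {1, …, n}, the valuation of the determinant of the m×m minor of M with rows s and columns t equals the valuation of the determinant of the corresponding minor of M' (with val(0) = ∞). Then x = x'. -/

import Mathlib

noncomputable section

open Matrix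

/-- The ε-adic valuation on `L = k̄((ε))`, with `val 0 = ∞`. -/
def val {K : Type*} [Field K] (x : LaurentSeries K) : WithTop ℤ := x.orderTop

/-- The uniformizer ε of the Laurent series field. -/
def eps (K : Type*) [Field K] : LaurentSeries K := HahnSeries.single 1 1

/-- A square matrix over `L = k̄((ε))` is of Iwahori form; the Iwahori subgroup `I` of
`G(L)` consists of the elements of `G(L)` of Iwahori form. -/
def IwahoriForm {K : Type*} [Field K] {n : ℕ}
    (M : Matrix (Fin n) (Fin n) (LaurentSeries K)) : Prop :=
  (∀ i, val (M i i) = 0) ∧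
  (∀ i j : Fin n, i < j → 0 ≤ val (M i j)) ∧
  (∀ i j : Fin n, j < i → 1 ≤ val (M i j))

/-- `x` is an ε-monomial matrix: exactly one nonzero entry in each row and each column,
and every nonzero entry is an integer power of ε. -/
def EpsMonomial {K : Type*} [Field K] {n : ℕ}
    (x : Matrix (Fin n) (Fin n) (LaurentSeries K)) : Prop :=
  (∀ i, ∃! j, x i j ≠ 0) ∧ (∀ j, ∃! i, x i j ≠ 0) ∧
  (∀ i j, x i j ≠ 0 → ∃ m : ℤ, x i j = eps K ^ m)

/-- `M` lies in the Iwahori double coset `I·x·I`. -/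
def InIxI {K : Type*} [Field K] {n : ℕ}
    (x M : Matrix (Fin n) (Fin n) (LaurentSeries K)) : Prop :=
  ∃ N₁ N₂, IwahoriForm N₁ ∧ IwahoriForm N₂ ∧ M = N₁ * x * N₂

namespace IwahoriAux

variable {K : Type*} [Field K]

lemma val_def (x : LaurentSeries K) : val x = HahnSeries.addVal ℤ K x :=
  HahnSeries.addVal_apply.symm

lemma val_mul (x y : LaurentSeries K) : val (x * y) = val x + val y := by
  simp only [val_def]; exact (HahnSeries.addVal ℤ K).map_mul x y

lemma val_zero : val (0 : LaurentSeries K) = ⊤ := by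
  simp [val, HahnSeries.orderTop_zero]

lemma val_one : val (1 : LaurentSeries K) = 0 := by
  simp only [val_def]; exact (HahnSeries.addVal ℤ K).map_one

lemma val_top_iff {x : LaurentSeries K} : val x = ⊤ ↔ x = 0 := HahnSeries.orderTop_eq_top

lemma val_neg (x : LaurentSeries K) : val (-x) = val x := by
  simp only [val_def]; exact (HahnSeries.addVal ℤ K).map_neg x

lemma val_le_sum {ι : Type*} {s : Finset ι} {f : ι → LaurentSeries K} {g : WithTop ℤ}
    (h : ∀ i ∈ s, g ≤ val (f i)) : g ≤ val (∑ i ∈ s, f i) := by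
  simp only [val_def] at *
  exact (HahnSeries.addVal ℤ K).map_le_sum h

lemma val_add_eq_left {x y : LaurentSeries K} (h : val x < val y) : val (x + y) = val x := by
  simp only [val_def] at *
  exact (HahnSeries.addVal ℤ K).map_add_eq_of_lt_left h

lemma val_prod {ι : Type*} (s : Finset ι) (f : ι → LaurentSeries K) :
    val (∏ i ∈ s, f i) = ∑ i ∈ s, val (f i) := by
  classical
  induction s using Finset.induction with
  | empty => simp [val_one]
  | insert a s' h ih => simp [Finset.prod_insert h, Finset.sum_insert h, val_mul, ih]

lemma eps_ne_zero : eps K ≠ 0 := HahnSeries.single_ne_zero one_ne_zero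

lemma val_eps : val (eps K) = 1 := HahnSeries.orderTop_single one_ne_zero

lemma val_eps_pow (k : ℕ) : val (eps K ^ k) = (k : ℤ) := by
  induction k with
  | zero => simpa using val_one
  | succ k ih => rw [pow_succ, val_mul, ih, val_eps]; push_cast; rfl

lemma val_inv {x : LaurentSeries K} (hx : x ≠ 0) {z : ℤ} (h : val x = (z : WithTop ℤ)) :
    val x⁻¹ = ((-z : ℤ) : WithTop ℤ) := by
  have h1 : val (x * x⁻¹) = 0 := by rw [mul_inv_cancel₀ hx, val_one]
  rw [val_mul, h] at h1
  have hne : val x⁻¹ ≠ ⊤ := fun hc => (inv_ne_zero hx) (val_top_iff.mp hc)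
  obtain ⟨y, hy⟩ := WithTop.ne_top_iff_exists.mp hne
  rw [← hy] at h1 ⊢
  rw [← WithTop.coe_add] at h1
  have := WithTop.coe_injective h1
  have : y = -z := by omega
  simp [this]

lemma val_eps_inv : val (eps K)⁻¹ = ((-1 : ℤ) : WithTop ℤ) :=
  val_inv eps_ne_zero (by rw [val_eps]; rfl)

lemma val_eps_inv_pow (k : ℕ) : val ((eps K)⁻¹ ^ k) = ((-k : ℤ) : WithTop ℤ) := by
  induction k with
  | zero => simpa using val_one
  | succ k ih =>
      rw [pow_succ, val_mul, ih, val_eps_inv, ← WithTop.coe_add]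
      congr 1
      push_cast
      ring

lemma val_eps_zpow (m : ℤ) : val (eps K ^ m) = (m : WithTop ℤ) := by
  cases m with
  | ofNat k => rw [Int.ofNat_eq_coe, zpow_natCast, val_eps_pow]
  | negSucc k =>
      rw [zpow_negSucc]
      have h : val (eps K ^ (k + 1)) = ((k + 1 : ℕ) : ℤ) := val_eps_pow (k + 1)
      rw [val_inv (pow_ne_zero _ eps_ne_zero) h]
      simp [Int.negSucc_eq]

lemma eps_zpow_ne_zero (m : ℤ) : eps K ^ m ≠ 0 := zpow_ne_zero m eps_ne_zero


lemma val_sign {m : ℕ} (π : Equiv.Perm (Fin m)) :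
    val (((Equiv.Perm.sign π : ℤ) : LaurentSeries K)) = 0 := by
  rcases Int.units_eq_one_or (Equiv.Perm.sign π) with h | h <;> rw [h]
  · simpa using val_one
  · push_cast
    rw [val_neg]
    exact val_one

lemma val_det_nonneg {m : ℕ} {A : Matrix (Fin m) (Fin m) (LaurentSeries K)}
    (h : ∀ i j, 0 ≤ val (A i j)) : 0 ≤ val A.det := by
  rw [Matrix.det_apply']
  refine val_le_sum fun π _ => ?_
  rw [val_mul, val_prod]
  have h1 : (0 : WithTop ℤ) ≤ ∑ i, val (A (π i) i) := Finset.sum_nonneg fun i _ => h _ _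
  calc (0 : WithTop ℤ) = 0 + 0 := by simp
  _ ≤ val ((Equiv.Perm.sign π : ℤ) : LaurentSeries K) + ∑ i, val (A (π i) i) := by
      rw [val_sign]; exact add_le_add le_rfl h1

section Iwahori

def IwahoriForm' {n : ℕ} (M : Matrix (Fin n) (Fin n) (LaurentSeries K)) : Prop :=
  (∀ i, val (M i i) = 0) ∧
  (∀ i j : Fin n, i < j → 0 ≤ val (M i j)) ∧
  (∀ i j : Fin n, j < i → 1 ≤ val (M i j))

variable {n : ℕ}

lemma IwahoriForm'.entry_nonneg {N : Matrix (Fin n) (Fin n) (LaurentSeries K)}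
    (h : IwahoriForm' N) (i j : Fin n) : 0 ≤ val (N i j) := by
  rcases lt_trichotomy i j with hij | hij | hij
  · exact h.2.1 i j hij
  · subst hij; exact le_of_eq (h.1 i).symm
  · exact le_trans (by norm_num) (h.2.2 i j hij)

lemma exists_gt_of_ne_one {σ : Equiv.Perm (Fin n)} (h : σ ≠ 1) : ∃ i, i < σ i := by
  by_contra hc
  push_neg at hc
  apply h
  ext i
  simp only [Equiv.Perm.coe_one, id_eq]
  -- σ i ≤ i for all i implies σ = id
  have key : ∀ k : ℕ, ∀ i : Fin n, i.val ≤ k → σ i = i := by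
    intro k
    induction k with
    | zero =>
        intro i hi
        have h1 : σ i ≤ i := hc i
        have h2 : (σ i).val = 0 := by omega
        have h3 : i.val = 0 := by omega
        exact Fin.ext (by omega)
    | succ k ih =>
        intro i hi
        rcases Nat.lt_or_ge i.val (k+1) with hlt | hge
        · exact ih i (by omega)
        · -- i.val = k+1
          have h1 : σ i ≤ i := hc i
          rcases lt_or_eq_of_le h1 with hlt2 | heq
          · -- σ i < i, so σ i has val ≤ k, so σ (σ i) = σ i, injectivity gives σ i = i, contra
            have h2 : σ (σ i) = σ i := ih (σ i) (by omega)
            exact absurd (σ.injective h2) (ne_of_lt hlt2)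
          · exact heq
  exact congrArg Fin.val (key i.val i le_rfl)

lemma IwahoriForm'.val_det {N : Matrix (Fin n) (Fin n) (LaurentSeries K)}
    (h : IwahoriForm' N) : val N.det = 0 := by
  classical
  rw [Matrix.det_apply']
  rw [← Finset.add_sum_erase Finset.univ _ (Finset.mem_univ (1 : Equiv.Perm (Fin n)))]
  have hid : val (((Equiv.Perm.sign (1 : Equiv.Perm (Fin n)) : ℤ) : LaurentSeries K)
      * ∏ i, N ((1 : Equiv.Perm (Fin n)) i) i) = 0 := by
    rw [val_mul, val_sign, val_prod]
    simp only [Equiv.Perm.coe_one, id_eq]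
    rw [Finset.sum_congr rfl fun i _ => h.1 i]
    simp
  have hrest : (1 : WithTop ℤ) ≤ val (∑ σ ∈ (Finset.univ.erase (1 : Equiv.Perm (Fin n))),
      ((Equiv.Perm.sign σ : ℤ) : LaurentSeries K) * ∏ i, N (σ i) i) := by
    refine val_le_sum fun σ hσ => ?_
    have hσ1 : σ ≠ 1 := (Finset.mem_erase.mp hσ).1
    obtain ⟨i₀, hi₀⟩ := exists_gt_of_ne_one hσ1
    rw [val_mul, val_prod]
    rw [← Finset.add_sum_erase Finset.univ _ (Finset.mem_univ i₀)]
    have h1 : (1 : WithTop ℤ) ≤ val (N (σ i₀) i₀) := h.2.2 _ _ hi₀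
    have h2 : (0 : WithTop ℤ) ≤ ∑ i ∈ Finset.univ.erase i₀, val (N (σ i) i) :=
      Finset.sum_nonneg fun i _ => h.entry_nonneg _ _
    calc (1 : WithTop ℤ) = 0 + (1 + 0) := by simp
    _ ≤ val ((Equiv.Perm.sign σ : ℤ) : LaurentSeries K) +
        (val (N (σ i₀) i₀) + ∑ i ∈ Finset.univ.erase i₀, val (N (σ i) i)) := by
        rw [val_sign]
        exact add_le_add le_rfl (add_le_add h1 h2)
  rw [val_add_eq_left (by rw [hid]; exact lt_of_lt_of_le (by norm_num) hrest)]
  exact hid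

end Iwahori


section Matrices

variable {n : ℕ}

lemma wt_helper {a b c : ℤ} {v : WithTop ℤ} (hv : (c : WithTop ℤ) ≤ v) (h : 0 ≤ a + c + b) :
    0 ≤ (a : WithTop ℤ) + v + (b : WithTop ℤ) := by
  cases v with
  | top => simp
  | coe z =>
      have hv' : c ≤ z := WithTop.coe_le_coe.mp hv
      rw [← WithTop.coe_add, ← WithTop.coe_add]
      exact_mod_cast (by omega : (0:ℤ) ≤ a + z + b)

variable (K)

def chiL (r : ℕ) (i : Fin n) : ℕ := if i.val < r then 1 else 0
def chiR (c : ℕ) (i : Fin n) : ℕ := if c ≤ i.val then 1 else 0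

def DL (r : ℕ) : Matrix (Fin n) (Fin n) (LaurentSeries K) :=
  Matrix.diagonal fun i => eps K ^ chiL r i
def DL' (r : ℕ) : Matrix (Fin n) (Fin n) (LaurentSeries K) :=
  Matrix.diagonal fun i => (eps K)⁻¹ ^ chiL r i
def DR (c : ℕ) : Matrix (Fin n) (Fin n) (LaurentSeries K) :=
  Matrix.diagonal fun i => eps K ^ chiR c i
def DR' (c : ℕ) : Matrix (Fin n) (Fin n) (LaurentSeries K) :=
  Matrix.diagonal fun i => (eps K)⁻¹ ^ chiR c i

variable {K}

lemma inv_pow_mul_pow (k : ℕ) : ((eps K)⁻¹) ^ k * eps K ^ k = 1 := by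
  rw [inv_pow, inv_mul_cancel₀ (pow_ne_zero _ eps_ne_zero)]

lemma pow_mul_inv_pow (k : ℕ) : eps K ^ k * ((eps K)⁻¹) ^ k = 1 := by
  rw [inv_pow, mul_inv_cancel₀ (pow_ne_zero _ eps_ne_zero)]

lemma DL'_mul_DL (r : ℕ) : DL' K r * DL K r = (1 : Matrix (Fin n) (Fin n) (LaurentSeries K)) := by
  rw [DL', DL, Matrix.diagonal_mul_diagonal]
  rw [show (fun i : Fin n => (eps K)⁻¹ ^ chiL r i * eps K ^ chiL r i) = fun _ => 1 from
    funext fun i => inv_pow_mul_pow _]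
  exact Matrix.diagonal_one

lemma DR_mul_DR' (c : ℕ) : DR K c * DR' K c = (1 : Matrix (Fin n) (Fin n) (LaurentSeries K)) := by
  rw [DR', DR, Matrix.diagonal_mul_diagonal]
  rw [show (fun i : Fin n => eps K ^ chiR c i * (eps K)⁻¹ ^ chiR c i) = fun _ => 1 from
    funext fun i => pow_mul_inv_pow _]
  exact Matrix.diagonal_one

lemma triple_diag_entry (d e : Fin n → LaurentSeries K)
    (N : Matrix (Fin n) (Fin n) (LaurentSeries K)) (i j : Fin n) :
    (Matrix.diagonal d * N * Matrix.diagonal e) i j = d i * N i j * e j := by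
  rw [Matrix.mul_diagonal, Matrix.diagonal_mul]

lemma conjL_entry_nonneg {N : Matrix (Fin n) (Fin n) (LaurentSeries K)}
    (hN : IwahoriForm' N) (r : ℕ) (i j : Fin n) :
    0 ≤ val ((DL K r * N * DL' K r : Matrix (Fin n) (Fin n) (LaurentSeries K)) i j) := by
  rw [DL, DL', triple_diag_entry, val_mul, val_mul, val_eps_pow, val_eps_inv_pow]
  by_cases hi : i.val < r <;> by_cases hj : j.val < r <;>
    simp only [chiL, hi, hj, if_true, if_false]
  · exact wt_helper (hN.entry_nonneg i j) (by norm_num)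
  · exact wt_helper (hN.entry_nonneg i j) (by norm_num)
  · -- i.val ≥ r, j.val < r : j < i, val ≥ 1
    have hij : j < i := by omega
    exact wt_helper (hN.2.2 i j hij) (by norm_num)
  · exact wt_helper (hN.entry_nonneg i j) (by norm_num)

lemma conjR_entry_nonneg {N : Matrix (Fin n) (Fin n) (LaurentSeries K)}
    (hN : IwahoriForm' N) (c : ℕ) (i j : Fin n) :
    0 ≤ val ((DR' K c * N * DR K c : Matrix (Fin n) (Fin n) (LaurentSeries K)) i j) := by
  rw [DR, DR', triple_diag_entry, val_mul, val_mul, val_eps_inv_pow, val_eps_pow]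
  by_cases hi : c ≤ i.val <;> by_cases hj : c ≤ j.val <;>
    simp only [chiR, hi, hj, if_true, if_false]
  · exact wt_helper (hN.entry_nonneg i j) (by norm_num)
  · -- c ≤ i.val, j.val < c : j < i, val ≥ 1
    have hij : j < i := by omega
    exact wt_helper (hN.2.2 i j hij) (by norm_num)
  · exact wt_helper (hN.entry_nonneg i j) (by norm_num)
  · exact wt_helper (hN.entry_nonneg i j) (by norm_num)

lemma det_conj_diag (f : Fin n → ℕ) (N : Matrix (Fin n) (Fin n) (LaurentSeries K)) :
    (Matrix.diagonal (fun i => eps K ^ f i) * N *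
      Matrix.diagonal (fun i => (eps K)⁻¹ ^ f i)).det = N.det := by
  rw [Matrix.det_mul, Matrix.det_mul, Matrix.det_diagonal, Matrix.det_diagonal]
  rw [mul_comm ((∏ i, eps K ^ f i) * N.det) _, ← mul_assoc, mul_comm _ (∏ i, eps K ^ f i),
    ← Finset.prod_mul_distrib]
  rw [show (∏ i, eps K ^ f i * (eps K)⁻¹ ^ f i) = 1 from
    Finset.prod_eq_one fun i _ => pow_mul_inv_pow _]
  rw [one_mul]

lemma conjL_det {N : Matrix (Fin n) (Fin n) (LaurentSeries K)}
    (hN : IwahoriForm' N) (r : ℕ) : val (DL K r * N * DL' K r).det = 0 := by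
  rw [DL, DL', det_conj_diag]; exact hN.val_det

lemma conjR_det {N : Matrix (Fin n) (Fin n) (LaurentSeries K)}
    (hN : IwahoriForm' N) (c : ℕ) : val (DR' K c * N * DR K c).det = 0 := by
  have : (DR' K c * N * DR K c).det = N.det := by
    rw [Matrix.det_mul, Matrix.det_mul, DR, DR', Matrix.det_diagonal, Matrix.det_diagonal]
    rw [mul_comm ((∏ i, (eps K)⁻¹ ^ chiR c i) * N.det) _, ← mul_assoc,
      mul_comm _ (∏ i, (eps K)⁻¹ ^ chiR c i), ← Finset.prod_mul_distrib]
    rw [show (∏ i, (eps K)⁻¹ ^ chiR c i * eps K ^ chiR c i) = 1 from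
      Finset.prod_eq_one fun i _ => inv_pow_mul_pow _]
    rw [one_mul]
  rw [this]; exact hN.val_det

/-- Inverse of an integral matrix with valuation-zero determinant is integral. -/
lemma inv_entry_nonneg {P : Matrix (Fin n) (Fin n) (LaurentSeries K)}
    (h0 : ∀ i j, 0 ≤ val (P i j)) (hd : val P.det = 0) (i j : Fin n) :
    0 ≤ val (P⁻¹ i j) := by
  have hdet : P.det ≠ 0 := by
    intro hc
    rw [hc, val_zero] at hd
    exact absurd hd.symm (by simp)
  rw [Matrix.inv_def, Matrix.smul_apply, Ring.inverse_eq_inv', smul_eq_mul, val_mul]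
  have h1 : val (P.det)⁻¹ = 0 := by
    have := val_inv hdet (z := 0) (by simpa using hd)
    simpa using this
  rw [h1, zero_add]
  rw [Matrix.adjugate_apply]
  refine val_det_nonneg fun a b => ?_
  by_cases hab : a = j
  · subst hab
    rw [Matrix.updateRow_self]
    by_cases hbi : b = i
    · subst hbi; simp [Pi.single_eq_same, val_one]
    · rw [Pi.single_eq_of_ne hbi]
      rw [val_zero]
      exact le_top
  · rw [Matrix.updateRow_ne hab]
    exact h0 a b

lemma det_ne_zero_of_val {P : Matrix (Fin n) (Fin n) (LaurentSeries K)}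
    (hd : val P.det = 0) : P.det ≠ 0 := by
  intro hc
  rw [hc, val_zero] at hd
  exact absurd hd.symm (by simp)

end Matrices


section Delta

variable {n : ℕ}

def delta (m : ℕ) (A : Matrix (Fin n) (Fin n) (LaurentSeries K)) : WithTop ℤ :=
  Finset.univ.inf fun p : (Fin m → Fin n) × (Fin m → Fin n) => val ((A.submatrix p.1 p.2).det)

lemma delta_le {m : ℕ} (A : Matrix (Fin n) (Fin n) (LaurentSeries K)) (s t : Fin m → Fin n) :
    delta m A ≤ val ((A.submatrix s t).det) :=
  Finset.inf_le (Finset.mem_univ ((s, t) : (Fin m → Fin n) × (Fin m → Fin n)))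

lemma le_delta {m : ℕ} {A : Matrix (Fin n) (Fin n) (LaurentSeries K)} {g : WithTop ℤ}
    (h : ∀ s t : Fin m → Fin n, g ≤ val ((A.submatrix s t).det)) : g ≤ delta m A :=
  Finset.le_inf fun p _ => h p.1 p.2

lemma det_mul_submatrix (P A : Matrix (Fin n) (Fin n) (LaurentSeries K)) {m : ℕ}
    (s t : Fin m → Fin n) :
    ((P * A).submatrix s t).det
      = ∑ u : Fin m → Fin n, (∏ i, P (s i) (u i)) * ((A.submatrix u t).det) := by
  have harg : ((P * A).submatrix s t : Fin m → Fin m → LaurentSeries K)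
      = fun i => ∑ k : Fin n, P (s i) k • fun j => A k (t j) := by
    funext i j
    simp [Matrix.mul_apply, Matrix.submatrix_apply, Finset.sum_apply, Pi.smul_apply, smul_eq_mul]
  show Matrix.detRowAlternating ((P * A).submatrix s t) = _
  rw [harg]
  rw [show (Matrix.detRowAlternating ((fun i => ∑ k : Fin n, P (s i) k • fun j => A k (t j)) :
      Fin m → Fin m → LaurentSeries K))
    = Matrix.detRowAlternating.toMultilinearMap
        (fun i => ∑ k : Fin n, P (s i) k • fun j => A k (t j)) from rfl]
  rw [MultilinearMap.map_sum]
  refine Finset.sum_congr rfl fun u _ => ?_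
  rw [show (Matrix.detRowAlternating.toMultilinearMap
      (fun i => P (s i) (u i) • fun j => A (u i) (t j)))
    = Matrix.detRowAlternating.toMultilinearMap
        (fun i => (fun i' => P (s i') (u i')) i • (fun i' => (A.submatrix u t) i') i) from rfl]
  rw [MultilinearMap.map_smul_univ]
  rw [smul_eq_mul]
  rfl

lemma delta_le_mul_left {m : ℕ} {P A : Matrix (Fin n) (Fin n) (LaurentSeries K)}
    (hP : ∀ i j, 0 ≤ val (P i j)) : delta m A ≤ delta m (P * A) := by
  refine le_delta fun s t => ?_
  rw [det_mul_submatrix]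
  refine val_le_sum fun u _ => ?_
  rw [val_mul]
  have h1 : (0 : WithTop ℤ) ≤ val (∏ i, P (s i) (u i)) := by
    rw [val_prod]; exact Finset.sum_nonneg fun i _ => hP _ _
  calc delta m A = 0 + delta m A := (zero_add _).symm
  _ ≤ val (∏ i, P (s i) (u i)) + val ((A.submatrix u t).det) :=
      add_le_add h1 (delta_le A u t)

lemma delta_transpose {m : ℕ} (A : Matrix (Fin n) (Fin n) (LaurentSeries K)) :
    delta m Aᵀ = delta m A := by
  have key : ∀ (B : Matrix (Fin n) (Fin n) (LaurentSeries K)), delta m B ≤ delta m Bᵀ := by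
    intro B
    refine le_delta fun s t => ?_
    have h : (Bᵀ.submatrix s t).det = (B.submatrix t s).det := by
      rw [← Matrix.transpose_submatrix, Matrix.det_transpose]
    rw [h]
    exact delta_le B t s
  refine le_antisymm ?_ (key A)
  have := key Aᵀ
  rwa [Matrix.transpose_transpose] at this

lemma delta_le_mul_right {m : ℕ} {P A : Matrix (Fin n) (Fin n) (LaurentSeries K)}
    (hP : ∀ i j, 0 ≤ val (P i j)) : delta m A ≤ delta m (A * P) := by
  rw [← delta_transpose A, ← delta_transpose (A * P), Matrix.transpose_mul]
  exact delta_le_mul_left fun i j => hP j i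

lemma delta_conj {m : ℕ} {P Q A : Matrix (Fin n) (Fin n) (LaurentSeries K)}
    (hP : ∀ i j, 0 ≤ val (P i j)) (hdP : val P.det = 0)
    (hQ : ∀ i j, 0 ≤ val (Q i j)) (hdQ : val Q.det = 0) :
    delta m (P * A * Q) = delta m A := by
  have hPu : IsUnit P.det := isUnit_iff_ne_zero.mpr (det_ne_zero_of_val hdP)
  have hQu : IsUnit Q.det := isUnit_iff_ne_zero.mpr (det_ne_zero_of_val hdQ)
  refine le_antisymm ?_ ?_
  · have hA : P⁻¹ * (P * A * Q) * Q⁻¹ = A := by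
      have e1 : P⁻¹ * P = 1 := Matrix.nonsing_inv_mul _ hPu
      have e2 : Q * Q⁻¹ = 1 := Matrix.mul_nonsing_inv _ hQu
      calc P⁻¹ * (P * A * Q) * Q⁻¹ = (P⁻¹ * P) * A * (Q * Q⁻¹) := by
            simp only [Matrix.mul_assoc]
        _ = A := by rw [e1, e2, Matrix.one_mul, Matrix.mul_one]
    calc delta m (P * A * Q)
        ≤ delta m (P⁻¹ * (P * A * Q)) := delta_le_mul_left (inv_entry_nonneg hP hdP)
      _ ≤ delta m (P⁻¹ * (P * A * Q) * Q⁻¹) := delta_le_mul_right (inv_entry_nonneg hQ hdQ)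
      _ = delta m A := by rw [hA]
  · calc delta m A ≤ delta m (P * A) := delta_le_mul_left hP
      _ ≤ delta m (P * A * Q) := delta_le_mul_right hQ

lemma delta_invariance {m : ℕ} {N₁ N₂ x : Matrix (Fin n) (Fin n) (LaurentSeries K)}
    (h1 : IwahoriForm' N₁) (h2 : IwahoriForm' N₂) (r c : ℕ) :
    delta m (DL K r * (N₁ * x * N₂) * DR K c) = delta m (DL K r * x * DR K c) := by
  have key : DL K r * (N₁ * x * N₂) * DR K c
      = (DL K r * N₁ * DL' K r) * (DL K r * x * DR K c) * (DR' K c * N₂ * DR K c) := by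
    simp only [← Matrix.mul_assoc]
    rw [Matrix.mul_assoc (DL K r * N₁) (DL' K r) (DL K r), DL'_mul_DL, Matrix.mul_one]
    rw [Matrix.mul_assoc (DL K r * N₁ * x) (DR K c) (DR' K c), DR_mul_DR', Matrix.mul_one]
  rw [key]
  exact delta_conj (conjL_entry_nonneg h1 r) (conjL_det h1 r)
    (conjR_entry_nonneg h2 c) (conjR_det h2 c)

end Delta


section Monomial

variable {n : ℕ}

lemma det_submatrix_monomial_match {B : Matrix (Fin n) (Fin n) (LaurentSeries K)}
    {σ : Fin n → Fin n} (hσ : Function.Injective σ) {w : Fin n → ℤ}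
    (hzero : ∀ i j, j ≠ σ i → B i j = 0)
    (hw : ∀ i, val (B i (σ i)) = ((w i : ℤ) : WithTop ℤ))
    {m : ℕ} (s t : Fin m → Fin n) (hs : Function.Injective s)
    (π : Equiv.Perm (Fin m)) (hπ : ∀ i, t i = σ (s (π i))) :
    val ((B.submatrix s t).det) = ((∑ i, w (s i) : ℤ) : WithTop ℤ) := by
  classical
  rw [Matrix.det_apply']
  rw [Finset.sum_eq_single π]
  · have hterm : ∀ i, (B.submatrix s t) (π i) i = B (s (π i)) (σ (s (π i))) := by
      intro i
      rw [Matrix.submatrix_apply, hπ i]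
    rw [val_mul, val_sign, zero_add, val_prod]
    rw [Finset.sum_congr rfl fun i _ => by rw [hterm i, hw]]
    rw [← WithTop.coe_sum]
    congr 1
    exact Equiv.sum_comp π fun i => w (s i)
  · intro τ _ hτ
    obtain ⟨i, hi⟩ : ∃ i, τ i ≠ π i := by
      by_contra hc
      push_neg at hc
      exact hτ (Equiv.ext hc)
    have hfac : (B.submatrix s t) (τ i) i = 0 := by
      rw [Matrix.submatrix_apply]
      refine hzero _ _ fun hc => hi ?_
      rw [hπ i] at hc
      exact hs (hσ hc.symm)
    rw [Finset.prod_eq_zero (f := fun j => (B.submatrix s t) (τ j) j)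
      (Finset.mem_univ i) hfac, mul_zero]
  · intro h
    exact absurd (Finset.mem_univ π) h

lemma det_submatrix_monomial_nomatch {B : Matrix (Fin n) (Fin n) (LaurentSeries K)}
    {σ : Fin n → Fin n}
    (hzero : ∀ i j, j ≠ σ i → B i j = 0)
    {m : ℕ} (s t : Fin m → Fin n)
    (hπ : ¬ ∃ π : Equiv.Perm (Fin m), ∀ i, t i = σ (s (π i))) :
    (B.submatrix s t).det = 0 := by
  classical
  rw [Matrix.det_apply']
  refine Finset.sum_eq_zero fun τ _ => ?_
  obtain ⟨i, hi⟩ : ∃ i, t i ≠ σ (s (τ i)) := by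
    by_contra hc
    push_neg at hc
    exact hπ ⟨τ, hc⟩
  have hfac : (B.submatrix s t) (τ i) i = 0 := by
    rw [Matrix.submatrix_apply]
    exact hzero _ _ hi
  rw [Finset.prod_eq_zero (f := fun j => (B.submatrix s t) (τ j) j)
    (Finset.mem_univ i) hfac, mul_zero]

lemma det_submatrix_row_noninj {B : Matrix (Fin n) (Fin n) (LaurentSeries K)}
    {m : ℕ} {s : Fin m → Fin n} (t : Fin m → Fin n) (hs : ¬ Function.Injective s) :
    (B.submatrix s t).det = 0 := by
  simp only [Function.Injective, not_forall] at hs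
  obtain ⟨i, j, hij, hne⟩ := hs
  refine Matrix.det_zero_of_row_eq hne ?_
  funext k
  simp [Matrix.submatrix_apply, hij]

lemma det_submatrix_col_noninj {B : Matrix (Fin n) (Fin n) (LaurentSeries K)}
    {m : ℕ} (s : Fin m → Fin n) {t : Fin m → Fin n} (ht : ¬ Function.Injective t) :
    (B.submatrix s t).det = 0 := by
  rw [← Matrix.det_transpose, Matrix.transpose_submatrix]
  exact det_submatrix_row_noninj s ht

/-- `delta m` of a generalized monomial matrix is the min over cardinality-`m` subsets of
the sum of exponents. -/
lemma delta_monomial {B : Matrix (Fin n) (Fin n) (LaurentSeries K)}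
    {σ : Fin n → Fin n} (hσ : Function.Injective σ) {w : Fin n → ℤ}
    (hzero : ∀ i j, j ≠ σ i → B i j = 0)
    (hw : ∀ i, val (B i (σ i)) = ((w i : ℤ) : WithTop ℤ)) (m : ℕ) :
    delta m B = (Finset.powersetCard m (Finset.univ : Finset (Fin n))).inf
      (fun S => ((∑ i ∈ S, w i : ℤ) : WithTop ℤ)) := by
  classical
  refine le_antisymm (Finset.le_inf fun S hS => ?_) (le_delta fun s t => ?_)
  · -- delta ≤ each subset sum
    obtain ⟨-, hcard⟩ := Finset.mem_powersetCard.mp hS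
    set s : Fin m → Fin n := fun j => S.orderEmbOfFin hcard j with hs_def
    have hs : Function.Injective s := (S.orderEmbOfFin hcard).injective
    have himg : Finset.image s Finset.univ = S := by
      ext a
      simp only [Finset.mem_image, Finset.mem_univ, true_and]
      constructor
      · rintro ⟨j, rfl⟩; exact Finset.orderEmbOfFin_mem S hcard j
      · intro ha
        have h2 : a ∈ Set.range (S.orderEmbOfFin hcard) := by
          rw [Finset.range_orderEmbOfFin]; exact ha
        obtain ⟨j, hj⟩ := h2
        exact ⟨j, hj⟩
    have hsum : ∑ i ∈ S, w i = ∑ i : Fin m, w (s i) := by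
      rw [← himg, Finset.sum_image (fun x _ y _ h => hs h)]
    calc delta m B ≤ val ((B.submatrix s (σ ∘ s)).det) := delta_le B s (σ ∘ s)
      _ = ((∑ i, w (s i) : ℤ) : WithTop ℤ) :=
          det_submatrix_monomial_match hσ hzero hw s (σ ∘ s) hs 1 (fun i => rfl)
      _ = _ := by rw [hsum]
  · -- inf ≤ every minor valuation
    by_cases hs : Function.Injective s
    · by_cases hπ : ∃ π : Equiv.Perm (Fin m), ∀ i, t i = σ (s (π i))
      · obtain ⟨π, hπ⟩ := hπ
        rw [det_submatrix_monomial_match hσ hzero hw s t hs π hπ]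
        have himg : Finset.image s Finset.univ ∈
            Finset.powersetCard m (Finset.univ : Finset (Fin n)) := by
          rw [Finset.mem_powersetCard]
          exact ⟨Finset.subset_univ _, by
            rw [Finset.card_image_of_injective _ hs, Finset.card_univ, Fintype.card_fin]⟩
        have h3 := Finset.inf_le (f := fun S => ((∑ i ∈ S, w i : ℤ) : WithTop ℤ)) himg
        refine le_trans h3 (le_of_eq ?_)
        rw [Finset.sum_image (fun x _ y _ h => hs h)]
      · rw [det_submatrix_monomial_nomatch hzero s t hπ, val_zero]
        exact le_top
    · rw [det_submatrix_row_noninj t hs, val_zero]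
      exact le_top

end Monomial


section Sorting

variable {n : ℕ}

lemma strictMono_val_le {m : ℕ} {f : Fin m → Fin n} (hf : StrictMono f) (j : Fin m) :
    j.val ≤ (f j).val := by
  obtain ⟨jv, hm⟩ : ∃ jv, j.val = jv := ⟨j.val, rfl⟩
  induction jv generalizing j with
  | zero => omega
  | succ k ih =>
      have hk : k < m := by omega
      have h1 : (⟨k, hk⟩ : Fin m) < j := by
        rw [Fin.lt_def, Fin.val_mk]; omega
      have h2 : f ⟨k, hk⟩ < f j := hf h1
      have h3 := ih ⟨k, hk⟩ rfl
      rw [Fin.lt_def] at h2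
      rw [Fin.val_mk] at h3
      omega

lemma sum_firstm_le {m : ℕ} (hmn : m ≤ n) (u : Fin n → ℤ) (hu : Monotone u)
    (S : Finset (Fin n)) (hS : S.card = m) :
    ∑ j : Fin m, u (Fin.castLE hmn j) ≤ ∑ i ∈ S, u i := by
  have himg : Finset.image (fun j : Fin m => S.orderEmbOfFin hS j) Finset.univ = S := by
    ext a
    simp only [Finset.mem_image, Finset.mem_univ, true_and]
    constructor
    · rintro ⟨j, rfl⟩; exact Finset.orderEmbOfFin_mem S hS j
    · intro ha
      have h2 : a ∈ Set.range (S.orderEmbOfFin hS) := by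
        rw [Finset.range_orderEmbOfFin]; exact ha
      obtain ⟨j, hj⟩ := h2
      exact ⟨j, hj⟩
  have hinj : Function.Injective (fun j : Fin m => S.orderEmbOfFin hS j) :=
    (S.orderEmbOfFin hS).injective
  rw [← himg, Finset.sum_image (fun x _ y _ h => hinj h)]
  refine Finset.sum_le_sum fun j _ => hu ?_
  have := strictMono_val_le (S.orderEmbOfFin hS).strictMono j
  rw [Fin.le_def]
  simpa using this

def msinf (w : Fin n → ℤ) (m : ℕ) : WithTop ℤ :=
  (Finset.powersetCard m (Finset.univ : Finset (Fin n))).inf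
    (fun S => ((∑ i ∈ S, w i : ℤ) : WithTop ℤ))

lemma msinf_eq_sorted (w : Fin n → ℤ) {m : ℕ} (hmn : m ≤ n) :
    msinf w m = ((∑ j : Fin m, (w ∘ Tuple.sort w) (Fin.castLE hmn j) : ℤ) : WithTop ℤ) := by
  classical
  set π := Tuple.sort w
  set u : Fin n → ℤ := w ∘ π with hu_def
  have hu : Monotone u := Tuple.monotone_sort w
  refine le_antisymm ?_ ?_
  · -- msinf ≤ sum of first m sorted values: witness subset
    set s : Fin m → Fin n := fun j => π (Fin.castLE hmn j) with hs_def
    have hs : Function.Injective s :=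
      fun a b hab => Fin.castLE_injective hmn (π.injective hab)
    have hmem : Finset.image s Finset.univ ∈
        Finset.powersetCard m (Finset.univ : Finset (Fin n)) := by
      rw [Finset.mem_powersetCard]
      exact ⟨Finset.subset_univ _, by
        rw [Finset.card_image_of_injective _ hs, Finset.card_univ, Fintype.card_fin]⟩
    refine le_trans (Finset.inf_le hmem) (le_of_eq ?_)
    rw [Finset.sum_image (fun x _ y _ h => hs h)]
    rfl
  · -- each subset sum is ≥ sum of first m sorted values
    refine Finset.le_inf fun S hS => ?_
    obtain ⟨-, hcard⟩ := Finset.mem_powersetCard.mp hS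
    set S' : Finset (Fin n) := Finset.image π.symm S with hS'_def
    have hcard' : S'.card = m := by
      rw [hS'_def, Finset.card_image_of_injective _ π.symm.injective, hcard]
    have hsum : ∑ i ∈ S, w i = ∑ i ∈ S', u i := by
      rw [hS'_def, Finset.sum_image (fun x _ y _ h => π.symm.injective h)]
      simp only [hu_def, Function.comp_apply, Equiv.apply_symm_apply]
    rw [hsum]
    exact WithTop.coe_le_coe.mpr (sum_firstm_le hmn u hu S' hcard')

end Sorting


section Counting

variable {n : ℕ}

lemma sorted_eq_of_msinf_eq {w w' : Fin n → ℤ}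
    (h : ∀ m : ℕ, 1 ≤ m → msinf w m = msinf w' m) :
    w ∘ Tuple.sort w = w' ∘ Tuple.sort w' := by
  have hP : ∀ (m : ℕ) (hmn : m ≤ n), (∑ j : Fin m, (w ∘ Tuple.sort w) (Fin.castLE hmn j))
      = ∑ j : Fin m, (w' ∘ Tuple.sort w') (Fin.castLE hmn j) := by
    intro m hmn
    rcases Nat.eq_zero_or_pos m with rfl | hm
    · simp
    · have h1 := h m hm
      rw [msinf_eq_sorted w hmn, msinf_eq_sorted w' hmn] at h1
      exact_mod_cast h1
  funext k
  have hk1 : (k : ℕ) + 1 ≤ n := k.2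
  have hk0 : (k : ℕ) ≤ n := Nat.le_of_succ_le hk1
  have e : ∀ (u : Fin n → ℤ), ∑ j : Fin (k.val + 1), u (Fin.castLE hk1 j)
      = (∑ j : Fin k.val, u (Fin.castLE hk0 j)) + u k := by
    intro u
    rw [Fin.sum_univ_castSucc]
    rfl
  have h1 := hP (k.val + 1) hk1
  have h0 := hP k.val hk0
  rw [e (w ∘ Tuple.sort w), e (w' ∘ Tuple.sort w')] at h1
  omega

lemma count_comp_sort (w : Fin n → ℤ) (v : ℤ) :
    (Finset.univ.filter fun i => (w ∘ Tuple.sort w) i ≤ v).card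
      = (Finset.univ.filter fun i => w i ≤ v).card := by
  classical
  set π := Tuple.sort w
  have himg : (Finset.univ.filter fun i => (w ∘ π) i ≤ v)
      = Finset.image π.symm (Finset.univ.filter fun i => w i ≤ v) := by
    ext a
    simp only [Finset.mem_filter, Finset.mem_univ, true_and, Finset.mem_image,
      Function.comp_apply]
    constructor
    · intro ha; exact ⟨π a, ha, π.symm_apply_apply a⟩
    · rintro ⟨b, hb, rfl⟩
      simpa [Equiv.apply_symm_apply] using hb
  rw [himg, Finset.card_image_of_injective _ π.symm.injective]

lemma count_eq_of_msinf_eq {w w' : Fin n → ℤ}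
    (h : ∀ m : ℕ, 1 ≤ m → msinf w m = msinf w' m) (v : ℤ) :
    (Finset.univ.filter fun i => w i ≤ v).card
      = (Finset.univ.filter fun i => w' i ≤ v).card := by
  classical
  rw [← count_comp_sort w v, ← count_comp_sort w' v, sorted_eq_of_msinf_eq h]

end Counting


section Main

variable {n : ℕ}

lemma val_sign' (u : ℤˣ) : val (((u : ℤ) : LaurentSeries K)) = 0 := by
  rcases Int.units_eq_one_or u with h | h <;> rw [h]
  · simpa using val_one
  · push_cast
    rw [val_neg]
    exact val_one

lemma monData_exists {x : Matrix (Fin n) (Fin n) (LaurentSeries K)}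
    (h1 : ∀ i, ∃! j, x i j ≠ 0) (h2 : ∀ j, ∃! i, x i j ≠ 0)
    (h3 : ∀ i j, x i j ≠ 0 → ∃ m : ℤ, x i j = eps K ^ m) :
    ∃ (σ : Fin n → Fin n) (a : Fin n → ℤ), Function.Injective σ ∧
      (∀ i, x i (σ i) = eps K ^ (a i)) ∧ (∀ i j, j ≠ σ i → x i j = 0) := by
  have h1' : ∀ i, ∃ j, x i j ≠ 0 ∧ ∀ y, x i y ≠ 0 → y = j := fun i => by
    obtain ⟨j, hj, hun⟩ := h1 i; exact ⟨j, hj, hun⟩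
  choose σ hσne hσun using h1'
  have hzero : ∀ i j, j ≠ σ i → x i j = 0 := fun i j hj => by
    by_contra hc; exact hj (hσun i j hc)
  have hσinj : Function.Injective σ := by
    intro i i' he
    obtain ⟨i₀, -, hu⟩ := h2 (σ i)
    have e1 := hu i (hσne i)
    have e2 := hu i' (by rw [he]; exact hσne i')
    rw [e1, ← e2]
  choose a ha using fun i => h3 i (σ i) (hσne i)
  exact ⟨σ, a, hσinj, ha, hzero⟩

/-- exponents of the weighted monomial matrix -/
def wfun (σ : Fin n → Fin n) (a : Fin n → ℤ) (r c : ℕ) (i : Fin n) : ℤ :=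
  a i + (chiL r i : ℤ) + (chiR c (σ i) : ℤ)

lemma delta_eq_msinf {x : Matrix (Fin n) (Fin n) (LaurentSeries K)}
    {σ : Fin n → Fin n} {a : Fin n → ℤ} (hσinj : Function.Injective σ)
    (hentry : ∀ i, x i (σ i) = eps K ^ (a i))
    (hzero : ∀ i j, j ≠ σ i → x i j = 0) (r c m : ℕ) :
    delta m (DL K r * x * DR K c) = msinf (wfun σ a r c) m := by
  refine delta_monomial hσinj (fun i j hj => ?_) (fun i => ?_) m
  · rw [DL, DR, triple_diag_entry, hzero i j hj, mul_zero, zero_mul]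
  · rw [DL, DR, triple_diag_entry, hentry i, val_mul, val_mul, val_eps_pow, val_eps_zpow,
      val_eps_pow, ← WithTop.coe_add, ← WithTop.coe_add]
    congr 1
    unfold wfun
    push_cast
    ring

lemma val_det_submatrix_eq_of_minors {M M' : Matrix (Fin n) (Fin n) (LaurentSeries K)}
    (hval : ∀ m : ℕ, 1 ≤ m → ∀ s t : Fin m → Fin n, StrictMono s → StrictMono t →
      val (M.submatrix s t).det = val (M'.submatrix s t).det)
    {m : ℕ} (hm : 1 ≤ m) (s t : Fin m → Fin n) :
    val ((M.submatrix s t).det) = val ((M'.submatrix s t).det) := by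
  classical
  by_cases hs : Function.Injective s
  · by_cases ht : Function.Injective t
    · set π := Tuple.sort s with hπ
      set τ := Tuple.sort t with hτ
      have hsm : StrictMono (s ∘ π) :=
        (Tuple.monotone_sort s).strictMono_of_injective (hs.comp π.injective)
      have htm : StrictMono (t ∘ τ) :=
        (Tuple.monotone_sort t).strictMono_of_injective (ht.comp τ.injective)
      have key : ∀ (A : Matrix (Fin n) (Fin n) (LaurentSeries K)),
          val ((A.submatrix s t).det) = val ((A.submatrix (s ∘ π) (t ∘ τ)).det) := by
        intro A
        have e1 : (A.submatrix s (t ∘ τ)).submatrix id τ.symm = A.submatrix s t := by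
          ext i j
          simp [Matrix.submatrix_apply, Equiv.apply_symm_apply]
        have e2 : (A.submatrix (s ∘ π) (t ∘ τ)).submatrix π.symm id = A.submatrix s (t ∘ τ) := by
          ext i j
          simp [Matrix.submatrix_apply, Equiv.apply_symm_apply]
        calc val ((A.submatrix s t).det)
            = val (((A.submatrix s (t ∘ τ)).submatrix id τ.symm).det) := by rw [e1]
          _ = val ((A.submatrix s (t ∘ τ)).det) := by
              rw [Matrix.det_permute', val_mul, val_sign', zero_add]
          _ = val (((A.submatrix (s ∘ π) (t ∘ τ)).submatrix π.symm id).det) := by rw [e2]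
          _ = val ((A.submatrix (s ∘ π) (t ∘ τ)).det) := by
              rw [Matrix.det_permute, val_mul, val_sign', zero_add]
      rw [key M, key M']
      exact hval m hm (s ∘ π) (t ∘ τ) hsm htm
    · rw [det_submatrix_col_noninj s ht, det_submatrix_col_noninj s ht]
  · rw [det_submatrix_row_noninj t hs, det_submatrix_row_noninj t hs]

lemma delta_weighted_eq {M M' : Matrix (Fin n) (Fin n) (LaurentSeries K)}
    (hval : ∀ m : ℕ, 1 ≤ m → ∀ s t : Fin m → Fin n, StrictMono s → StrictMono t →
      val (M.submatrix s t).det = val (M'.submatrix s t).det)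
    (r c : ℕ) {m : ℕ} (hm : 1 ≤ m) :
    delta m (DL K r * M * DR K c) = delta m (DL K r * M' * DR K c) := by
  refine Finset.inf_congr rfl fun p _ => ?_
  obtain ⟨s, t⟩ := p
  have key : ∀ (A : Matrix (Fin n) (Fin n) (LaurentSeries K)),
      (DL K r * A * DR K c).submatrix s t
        = Matrix.diagonal (fun i => eps K ^ chiL r (s i)) * (A.submatrix s t)
          * Matrix.diagonal (fun j => eps K ^ chiR c (t j)) := by
    intro A
    ext i j
    rw [Matrix.submatrix_apply, triple_diag_entry, DL, DR, triple_diag_entry]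
    rfl
  simp only
  rw [key M, key M', Matrix.det_mul, Matrix.det_mul, Matrix.det_mul, Matrix.det_mul,
    val_mul, val_mul, val_mul, val_mul,
    val_det_submatrix_eq_of_minors hval hm s t]

lemma chiR_lt (c : ℕ) (j : Fin n) : (chiR c j : ℤ) = 0 ↔ j.val < c := by
  unfold chiR
  split_ifs with h <;> simp <;> omega

lemma cnt_step (σ : Fin n → Fin n) (a : Fin n → ℤ) (i₀ : Fin n) (c : ℕ) (v : ℤ) :
    (Finset.univ.filter fun i => wfun σ a i₀.val c i ≤ v).card
      = (Finset.univ.filter fun i => wfun σ a (i₀.val + 1) c i ≤ v).card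
        + (if a i₀ + (chiR c (σ i₀) : ℤ) = v then 1 else 0) := by
  classical
  rw [Finset.card_filter, Finset.card_filter]
  rw [← Finset.add_sum_erase _ _ (Finset.mem_univ i₀),
    ← Finset.add_sum_erase _ _ (Finset.mem_univ i₀)]
  have hrest : (∑ i ∈ Finset.univ.erase i₀, if wfun σ a i₀.val c i ≤ v then 1 else 0)
      = ∑ i ∈ Finset.univ.erase i₀, if wfun σ a (i₀.val + 1) c i ≤ v then 1 else 0 := by
    refine Finset.sum_congr rfl fun i hi => ?_
    have hne : i ≠ i₀ := (Finset.mem_erase.mp hi).1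
    have hv : i.val ≠ i₀.val := fun hc => hne (Fin.ext hc)
    have : chiL i₀.val i = chiL (i₀.val + 1) i := by
      unfold chiL
      split_ifs with h1 h2 <;> first | rfl | omega
    unfold wfun
    rw [this]
  rw [hrest]
  have hL0 : chiL (n := n) i₀.val i₀ = 0 := by unfold chiL; simp
  have hL1 : chiL (n := n) (i₀.val + 1) i₀ = 1 := by unfold chiL; simp
  unfold wfun
  rw [hL0, hL1]
  push_cast
  split_ifs <;> omega

lemma recover_eq {σ σ' : Fin n → Fin n} {a a' : Fin n → ℤ}
    (hcnt : ∀ (r c : ℕ) (v : ℤ),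
      (Finset.univ.filter fun i => wfun σ a r c i ≤ v).card
        = (Finset.univ.filter fun i => wfun σ' a' r c i ≤ v).card)
    (i₀ : Fin n) : σ i₀ = σ' i₀ ∧ a i₀ = a' i₀ := by
  classical
  have key : ∀ (c : ℕ) (v : ℤ),
      (if a i₀ + (chiR c (σ i₀) : ℤ) = v then (1:ℕ) else 0)
        = (if a' i₀ + (chiR c (σ' i₀) : ℤ) = v then 1 else 0) := by
    intro c v
    have e1 := cnt_step σ a i₀ c v
    have e2 := cnt_step σ' a' i₀ c v
    have e3 := hcnt i₀.val c v
    have e4 := hcnt (i₀.val + 1) c v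
    omega
  have ha : a i₀ = a' i₀ := by
    have h1 := key n (a i₀)
    have hc0 : chiR (n := n) n (σ i₀) = 0 := by unfold chiR; simp [Nat.not_le.mpr (σ i₀).2]
    have hc0' : chiR (n := n) n (σ' i₀) = 0 := by unfold chiR; simp [Nat.not_le.mpr (σ' i₀).2]
    rw [hc0, hc0'] at h1
    push_cast at h1
    split_ifs at h1 with h2 h3 <;> omega
  refine ⟨?_, ha⟩
  have hσ : ∀ c : ℕ, (σ i₀).val < c ↔ (σ' i₀).val < c := by
    intro c
    have h1 := key c (a i₀)
    rw [ha] at h1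
    constructor
    · intro hlt
      have hz : (chiR c (σ i₀) : ℤ) = 0 := (chiR_lt c (σ i₀)).mpr hlt
      rw [hz] at h1
      simp only [add_zero, if_pos rfl] at h1
      by_contra hc
      have hnz : (chiR (n := n) c (σ' i₀) : ℤ) = 1 := by
        unfold chiR; rw [if_pos (by omega)]; rfl
      rw [hnz] at h1
      split_ifs at h1 with h2 <;> omega
    · intro hlt
      have hz : (chiR c (σ' i₀) : ℤ) = 0 := (chiR_lt c (σ' i₀)).mpr hlt
      rw [hz] at h1
      simp only [add_zero, if_pos rfl] at h1
      by_contra hc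
      have hnz : (chiR (n := n) c (σ i₀) : ℤ) = 1 := by
        unfold chiR; rw [if_pos (by omega)]; rfl
      rw [hnz] at h1
      split_ifs at h1 with h2 <;> omega
  have h1 := hσ ((σ i₀).val + 1)
  have h2 := hσ ((σ' i₀).val + 1)
  exact Fin.ext (by omega)

end Main

end IwahoriAux


/-- if `M ∈ I·x·I` and `M' ∈ I·x'·I` with `x`, `x'` ε-monomial matrices, and
if for every `1 ≤ m ≤ n` and every pair of strictly increasing `m`-tuples `s`, `t` of
indices the valuations of the determinants of the corresponding `m×m` minors of `M` and
`M'` agree, then `x = x'`.  (The element `x ∈ W̃` with `M ∈ IxI` is uniquely determined by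
the valuations of the determinants of the minors of `M`.) -/
theorem iwahori_coset_determined_by_minor_valuations
    (F : Type*) [Field F] [Fintype F] (n : ℕ)
    (M M' x x' : Matrix (Fin n) (Fin n) (LaurentSeries (AlgebraicClosure F)))
    (hx : EpsMonomial x) (hx' : EpsMonomial x')
    (hM : InIxI x M) (hM' : InIxI x' M')
    (hval : ∀ m : ℕ, 1 ≤ m → ∀ s t : Fin m → Fin n, StrictMono s → StrictMono t →
      val (M.submatrix s t).det = val (M'.submatrix s t).det) :
    x = x' := by
  classical
  obtain ⟨N₁, N₂, h1, h2, hMeq⟩ := hM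
  obtain ⟨N₁', N₂', h1', h2', hMeq'⟩ := hM'
  obtain ⟨σ, a, hσinj, hentry, hzero⟩ := IwahoriAux.monData_exists hx.1 hx.2.1 hx.2.2
  obtain ⟨σ', a', hσinj', hentry', hzero'⟩ := IwahoriAux.monData_exists hx'.1 hx'.2.1 hx'.2.2
  have h1I : IwahoriAux.IwahoriForm' N₁ := h1
  have h2I : IwahoriAux.IwahoriForm' N₂ := h2
  have h1I' : IwahoriAux.IwahoriForm' N₁' := h1'
  have h2I' : IwahoriAux.IwahoriForm' N₂' := h2'
  set K := AlgebraicClosure F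
  have hmsinf : ∀ (r c m : ℕ), 1 ≤ m →
      IwahoriAux.msinf (IwahoriAux.wfun σ a r c) m
        = IwahoriAux.msinf (IwahoriAux.wfun σ' a' r c) m := by
    intro r c m hm
    calc IwahoriAux.msinf (IwahoriAux.wfun σ a r c) m
        = IwahoriAux.delta m (IwahoriAux.DL K r * x * IwahoriAux.DR K c) :=
          (IwahoriAux.delta_eq_msinf hσinj hentry hzero r c m).symm
      _ = IwahoriAux.delta m (IwahoriAux.DL K r * M * IwahoriAux.DR K c) := by
          rw [hMeq]
          exact (IwahoriAux.delta_invariance h1I h2I r c).symm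
      _ = IwahoriAux.delta m (IwahoriAux.DL K r * M' * IwahoriAux.DR K c) :=
          IwahoriAux.delta_weighted_eq hval r c hm
      _ = IwahoriAux.delta m (IwahoriAux.DL K r * x' * IwahoriAux.DR K c) := by
          rw [hMeq']
          exact IwahoriAux.delta_invariance h1I' h2I' r c
      _ = IwahoriAux.msinf (IwahoriAux.wfun σ' a' r c) m :=
          IwahoriAux.delta_eq_msinf hσinj' hentry' hzero' r c m
  have hcnt : ∀ (r c : ℕ) (v : ℤ),
      (Finset.univ.filter fun i => IwahoriAux.wfun σ a r c i ≤ v).card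
        = (Finset.univ.filter fun i => IwahoriAux.wfun σ' a' r c i ≤ v).card :=
    fun r c v => IwahoriAux.count_eq_of_msinf_eq (fun m hm => hmsinf r c m hm) v
  have hrec : ∀ i₀, σ i₀ = σ' i₀ ∧ a i₀ = a' i₀ :=
    fun i₀ => IwahoriAux.recover_eq hcnt i₀
  ext i j
  by_cases hj : j = σ i
  · subst hj
    rw [hentry i, (hrec i).2, (hrec i).1, hentry' i]
  · rw [hzero i j hj, hzero' i j (by rw [← (hrec i).1]; exact hj)]
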